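/- Let E : [0,T) → [0,∞) be C¹ with E'(t) ≤ C(E(t) + E(t)³) and suppose E is unbounded as t → T < ∞. Then there exists a sequence t_k → T and a constant c > 0 such that E(t_k) ≥ c (T − t_k)^{−1/2}. -/

import Mathlib

open Set Filter Real

theorem stmt_17 (T : ℝ) (hT : 0 < T) (C : ℝ) (hC : 0 < C) (E E' : ℝ → ℝ)
    (hnonneg : ∀ t ∈ Ico (0:ℝ) T, 0 ≤ E t)
    (hderiv : ∀ t ∈ Ico (0:ℝ) T, HasDerivAt E (E' t) t)
    (hE'cont : ContinuousOn E' (Ico (0:ℝ) T))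
    (hineq : ∀ t ∈ Ico (0:ℝ) T, E' t ≤ C * (E t + E t ^ 3))
    (sj : ℕ → ℝ) (hsj : ∀ j, sj j ∈ Ico (0:ℝ) T)
    (hsjT : Tendsto sj atTop (nhds T))
    (hblow : Tendsto (fun j => E (sj j)) atTop atTop) :
    ∃ c : ℝ, 0 < c ∧ ∃ tk : ℕ → ℝ, (∀ k, tk k ∈ Ico (0:ℝ) T) ∧
      Tendsto tk atTop (nhds T) ∧
      ∀ k, c * (T - tk k) ^ (-(1:ℝ)/2) ≤ E (tk k) := by
  set φ : ℝ → ℝ := fun t => ((E t + 1)⁻¹) ^ 2 + 2 * C * t with hφ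
  have hpos : ∀ t ∈ Ico (0:ℝ) T, 0 < E t + 1 := fun t ht => by linarith [hnonneg t ht]
  -- derivative of φ
  have hφd : ∀ t ∈ Ico (0:ℝ) T,
      HasDerivAt φ (2 * ((E t + 1)⁻¹) * (-(E' t) / (E t + 1) ^ 2) + 2 * C) t := by
    intro t ht
    have h2 : HasDerivAt (fun y => E y + 1) (E' t) t := (hderiv t ht).add_const 1
    have h3 : HasDerivAt (fun y => (E y + 1)⁻¹) (-(E' t) / (E t + 1) ^ 2) t :=
      h2.inv (ne_of_gt (hpos t ht))
    have h4 := h3.pow 2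
    have h5 : HasDerivAt (fun y : ℝ => 2 * C * y) (2 * C) t := by
      simpa using (hasDerivAt_id t).const_mul (2 * C)
    have := h4.add h5
    refine this.congr_deriv ?_
    push_cast
    ring
  have hDnonneg : ∀ t ∈ Ico (0:ℝ) T,
      0 ≤ 2 * ((E t + 1)⁻¹) * (-(E' t) / (E t + 1) ^ 2) + 2 * C := by
    intro t ht
    have ha := hpos t ht
    have ha3 : (0:ℝ) < (E t + 1) ^ 3 := by positivity
    have hE := hnonneg t ht
    have key : E' t ≤ C * (E t + 1) ^ 3 := by
      have := hineq t ht
      nlinarith [sq_nonneg (E t), hC.le]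
    have e1 : 2 * ((E t + 1)⁻¹) * (-(E' t) / (E t + 1) ^ 2) + 2 * C
        = (2 * (C * (E t + 1) ^ 3 - E' t)) / (E t + 1) ^ 3 := by
      field_simp
      ring
    rw [e1]
    exact div_nonneg (by linarith) ha3.le
  -- φ is monotone on [0, T)
  have hmono : MonotoneOn φ (Ico (0:ℝ) T) := by
    apply monotoneOn_of_deriv_nonneg (convex_Ico 0 T)
    · exact fun x hx => ((hφd x hx).continuousAt).continuousWithinAt
    · intro x hx
      rw [interior_Ico] at hx
      exact ((hφd x (Ioo_subset_Ico_self hx)).differentiableAt).differentiableWithinAt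
    · intro x hx
      rw [interior_Ico] at hx
      rw [(hφd x (Ioo_subset_Ico_self hx)).deriv]
      exact hDnonneg x (Ioo_subset_Ico_self hx)
  -- the key inequality: (E t + 1)⁻¹ ^ 2 ≤ 2C (T - t)
  have hkey : ∀ t ∈ Ico (0:ℝ) T, ((E t + 1)⁻¹) ^ 2 ≤ 2 * C * (T - t) := by
    intro t ht
    have hlim : Tendsto (fun j => φ (sj j)) atTop (nhds (0 ^ 2 + 2 * C * T)) := by
      apply Tendsto.add
      · apply Tendsto.pow
        exact (tendsto_atTop_add_const_right _ 1 hblow).inv_tendsto_atTop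
      · exact (hsjT.const_mul (2 * C))
    have hev : ∀ᶠ j in atTop, φ t ≤ φ (sj j) := by
      filter_upwards [hsjT.eventually (eventually_gt_nhds ht.2)] with j hj
      exact hmono ht (hsj j) hj.le
    have := ge_of_tendsto hlim hev
    simp only [hφ] at this
    nlinarith [this]
  -- choose the sequence
  set δ : ℝ := min (1 / (8 * C)) (T / 2) with hδdef
  have hδpos : 0 < δ := lt_min (by positivity) (by linarith)
  have hδ1 : δ ≤ 1 / (8 * C) := min_le_left _ _
  have hδ2 : δ ≤ T / 2 := min_le_right _ _
  refine ⟨1 / (2 * Real.sqrt (2 * C)), by positivity, fun k => T - δ / (k + 1), ?_, ?_, ?_⟩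
  · intro k
    have hk1 : (0:ℝ) < (k:ℝ) + 1 := by positivity
    have hx : 0 < δ / (k + 1) := by positivity
    have hx2 : δ / (k + 1) ≤ δ := by
      rw [div_le_iff₀ hk1]
      nlinarith [hδpos]
    constructor
    · linarith [hδ2]
    · linarith
  · have h0 : Tendsto (fun k : ℕ => δ / ((k:ℝ) + 1)) atTop (nhds 0) := by
      have := tendsto_one_div_add_atTop_nhds_zero_nat (𝕜 := ℝ)
      have h := this.const_mul δ
      simpa [div_eq_mul_inv, mul_comm] using h
    have h1 : Tendsto (fun k : ℕ => T - δ / ((k:ℝ) + 1)) atTop (nhds (T - 0)) :=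
      Tendsto.sub tendsto_const_nhds h0
    simpa using h1
  · intro k
    have hk1 : (0:ℝ) < (k:ℝ) + 1 := by positivity
    set x : ℝ := δ / (k + 1) with hxdef
    have hx : 0 < x := by positivity
    have hx2 : x ≤ δ := by
      rw [hxdef, div_le_iff₀ hk1]
      nlinarith [hδpos]
    have hxC : 2 * C * x ≤ 1 / 4 := by
      have : x ≤ 1 / (8 * C) := le_trans hx2 hδ1
      rw [le_div_iff₀ (by positivity)] at this
      nlinarith
    have htmem : T - x ∈ Ico (0:ℝ) T := ⟨by linarith [hδ2], by linarith⟩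
    have hk := hkey (T - x) htmem
    have hTsub : T - (T - x) = x := by ring
    rw [hTsub] at hk
    set a : ℝ := E (T - x) + 1 with hadef
    have ha : 0 < a := hpos _ htmem
    -- from a⁻¹ ^ 2 ≤ 2Cx : a⁻¹ ≤ √(2Cx)
    set s : ℝ := Real.sqrt (2 * C * x) with hsdef
    have hspos : 0 < s := Real.sqrt_pos.mpr (by positivity)
    have hs2 : s ^ 2 = 2 * C * x := Real.sq_sqrt (by positivity)
    have hinv_le : a⁻¹ ≤ s := by
      have h1 : a⁻¹ = Real.sqrt ((a⁻¹) ^ 2) := (Real.sqrt_sq (by positivity)).symm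
      rw [h1, hsdef]
      exact Real.sqrt_le_sqrt hk
    have hs_half : s ≤ 1 / 2 := by
      have : s ≤ Real.sqrt (1 / 4) := Real.sqrt_le_sqrt hxC
      have h14 : Real.sqrt (1 / 4) = 1 / 2 := by
        rw [show (1:ℝ)/4 = (1/2)^2 by norm_num, Real.sqrt_sq (by norm_num)]
      linarith [this, h14 ▸ this]
    -- so 1/s ≤ a, hence E(T-x) = a - 1 ≥ 1/s - 1 ≥ 1/(2s)
    have h1s : 1 / s ≤ a := by
      rw [div_le_iff₀ hspos]
      have := mul_le_mul_of_nonneg_left hinv_le ha.le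
      rw [mul_inv_cancel₀ (ne_of_gt ha)] at this
      linarith [this]
    have hE_ge : 1 / (2 * s) ≤ E (T - x) := by
      have h2 : 1 ≤ 1 / (2 * s) := by
        rw [le_div_iff₀ (by positivity)]
        linarith
      have h3 : 1 / s = 1 / (2 * s) + 1 / (2 * s) := by
        field_simp
        ring
      have : E (T - x) = a - 1 := by rw [hadef]; ring
      rw [this]
      linarith [h1s, h2, h3 ▸ h1s]
    -- rewrite the rpow
    have hrpow : x ^ (-(1:ℝ)/2) = (Real.sqrt x)⁻¹ := by
      rw [show (-(1:ℝ)/2) = -(1/2) by ring, Real.rpow_neg hx.le, ← Real.sqrt_eq_rpow]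
    have hsplit : s = Real.sqrt (2 * C) * Real.sqrt x := by
      rw [hsdef, ← Real.sqrt_mul (by positivity)]
    have hsx : 0 < Real.sqrt x := Real.sqrt_pos.mpr hx
    have hsc : 0 < Real.sqrt (2 * C) := Real.sqrt_pos.mpr (by positivity)
    calc 1 / (2 * Real.sqrt (2 * C)) * (T - (T - x)) ^ (-(1:ℝ)/2)
        = 1 / (2 * Real.sqrt (2 * C)) * (Real.sqrt x)⁻¹ := by rw [hTsub, hrpow]
      _ = 1 / (2 * s) := by rw [hsplit]; field_simp
      _ ≤ E (T - x) := hE_ge
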